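/- For every integer d ≥ 1 and every constant α ∈ (0, 1/2) there exists a constant c > 0 such that the following holds: if H is the complete bipartite n-vertex graph with parts A and B of sizes ⌊αn⌋ and n − ⌊αn⌋, then asymptotically almost surely the union graph H ∪ G^d(n, (c/n)^{1/d}) is not Hamiltonian. -/

import Mathlib

open MeasureTheory Filter

/-- The uniform probability measure on `n` independent points in `[0,1]^d`. -/
noncomputable def unifCube (d n : ℕ) :
    Measure (Fin n → EuclideanSpace ℝ (Fin d)) :=
  (volume : Measure (Fin n → EuclideanSpace ℝ (Fin d))).restrict
    {x | ∀ i, ∀ k, x i k ∈ Set.Icc (0 : ℝ) 1}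

/-- The geometric graph on `n` vertices given by positions `x` and radius `r`. -/
def geoGraph (d n : ℕ) (r : ℝ) (x : Fin n → EuclideanSpace ℝ (Fin d)) :
    SimpleGraph (Fin n) :=
  SimpleGraph.fromRel (fun i j => dist (x i) (x j) ≤ r)

open MeasureTheory Filter Set
open scoped ENNReal

section MeasureLemmas

variable {E : Type*} [MeasurableSpace E] (μ : Measure E) [IsProbabilityMeasure μ]

lemma pi_eval_eq {ι : Type*} [Fintype ι] (j : ι) (A : Set E) :
    Measure.pi (fun _ : ι => μ) (Function.eval j ⁻¹' A) = μ A := by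
  classical
  rw [← Set.univ_pi_update_univ, Measure.pi_pi]
  rw [Finset.prod_eq_single j (fun i _ hi => by simp [Function.update_of_ne hi])
    (fun h => absurd (Finset.mem_univ j) h)]
  simp

lemma pair_coord_bound {D : Set (E × E)} (hD : MeasurableSet D) {q : ℝ≥0∞}
    (hq : ∀ z : E, μ {y | (z, y) ∈ D} ≤ q)
    {ι : Type*} [Fintype ι] {i j : ι} (hij : i ≠ j) :
    Measure.pi (fun _ : ι => μ) {x | (x i, x j) ∈ D} ≤ q := by
  classical
  set p : ι → Prop := fun k => k = i with hp
  have hmp := measurePreserving_piEquivPiSubtypeProd (fun _ : ι => μ) p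
  set T : Set ((∀ _ : {k // p k}, E) × (∀ _ : {k // ¬ p k}, E)) :=
    {uv | (uv.1 ⟨i, rfl⟩, uv.2 ⟨j, fun h => hij (h ▸ rfl)⟩) ∈ D} with hT
  have hTm : MeasurableSet T := by
    have : Measurable (fun uv : ((∀ _ : {k // p k}, E) × (∀ _ : {k // ¬ p k}, E)) =>
        (uv.1 ⟨i, rfl⟩, uv.2 ⟨j, fun h => hij (h ▸ rfl)⟩)) :=
      ((measurable_pi_apply _).comp measurable_fst).prodMk
        ((measurable_pi_apply _).comp measurable_snd)
    exact this hD
  have hpre : {x : ι → E | (x i, x j) ∈ D} =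
      (MeasurableEquiv.piEquivPiSubtypeProd (fun _ : ι => E) p) ⁻¹' T := rfl
  rw [hpre, hmp.measure_preimage hTm.nullMeasurableSet]
  rw [Measure.prod_apply hTm]
  have hsec : ∀ u : (∀ _ : {k // p k}, E),
      (Measure.pi fun _ : {k // ¬ p k} => μ) (Prod.mk u ⁻¹' T) ≤ q := by
    intro u
    have : Prod.mk u ⁻¹' T =
        Function.eval (⟨j, fun h => hij (h ▸ rfl)⟩ : {k // ¬ p k}) ⁻¹'
          {y : E | (u ⟨i, rfl⟩, y) ∈ D} := rfl
    rw [this, pi_eval_eq]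
    exact hq _
  exact (lintegral_mono hsec).trans (by simp)

end MeasureLemmas
section KeyLemma

open MeasureTheory Set
open scoped ENNReal

variable {E : Type*} [MeasurableSpace E] (μ : Measure E) [IsProbabilityMeasure μ]

lemma key_pi_bound {D : Set (E × E)} (hD : MeasurableSet D) {q : ℝ≥0∞}
    (hq : ∀ z : E, μ {y | (z, y) ∈ D} ≤ q) :
    ∀ (m : ℕ) (ι : Type) [Fintype ι] (a b : Fin m → ι),
      Function.Injective (Sum.elim a b) →
      Measure.pi (fun _ : ι => μ) {x | ∀ k, (x (a k), x (b k)) ∈ D} ≤ q ^ m := by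
  intro m
  induction m with
  | zero =>
    intro ι _ a b _
    simpa using measure_mono (subset_univ _) |>.trans_eq (by simp)
  | succ m IH =>
    intro ι _ a b hinj
    classical
    set p : ι → Prop := fun k => k = a 0 ∨ k = b 0 with hp
    have hinjA : Function.Injective a := fun k l h => by
      have := hinj (show Sum.elim a b (.inl k) = Sum.elim a b (.inl l) from h)
      exact Sum.inl.inj this
    have hinjB : Function.Injective b := fun k l h => by
      have := hinj (show Sum.elim a b (.inr k) = Sum.elim a b (.inr l) from h)
      exact Sum.inr.inj this
    have hAB : ∀ k l, a k ≠ b l := fun k l h =>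
      Sum.inl_ne_inr (hinj (show Sum.elim a b (.inl k) = Sum.elim a b (.inr l) from h))
    have hab : a 0 ≠ b 0 := hAB 0 0
    have ha' : ∀ k : Fin m, ¬ p (a k.succ) := by
      intro k hk
      rcases hk with hk | hk
      · exact (Fin.succ_ne_zero k) (hinjA hk)
      · exact hAB _ _ hk
    have hb' : ∀ k : Fin m, ¬ p (b k.succ) := by
      intro k hk
      rcases hk with hk | hk
      · exact hAB _ _ hk.symm
      · exact (Fin.succ_ne_zero k) (hinjB hk)
    set a' : Fin m → {k // ¬ p k} := fun k => ⟨a k.succ, ha' k⟩ with ha'd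
    set b' : Fin m → {k // ¬ p k} := fun k => ⟨b k.succ, hb' k⟩ with hb'd
    have hinj' : Function.Injective (Sum.elim a' b') := by
      intro s t hst
      cases s with
      | inl s => cases t with
        | inl t =>
          have : a s.succ = a t.succ := by simpa [a', b', Subtype.ext_iff] using hst
          exact congrArg Sum.inl (Fin.succ_injective _ (hinjA this))
        | inr t =>
          have : a s.succ = b t.succ := by simpa [a', b', Subtype.ext_iff] using hst
          exact absurd this (hAB _ _)
      | inr s => cases t with
        | inl t =>
          have : a t.succ = b s.succ := by
            simpa [a', b', Subtype.ext_iff] using hst.symm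
          exact absurd this (hAB _ _)
        | inr t =>
          have : b s.succ = b t.succ := by simpa [a', b', Subtype.ext_iff] using hst
          exact congrArg Sum.inr (Fin.succ_injective _ (hinjB this))
    have hmp := measurePreserving_piEquivPiSubtypeProd (fun _ : ι => μ) p
    set S₁ : Set (∀ _ : {k // p k}, E) :=
      {u | (u ⟨a 0, Or.inl rfl⟩, u ⟨b 0, Or.inr rfl⟩) ∈ D} with hS₁
    set S₂ : Set (∀ _ : {k // ¬ p k}, E) :=
      {v | ∀ k : Fin m, (v (a' k), v (b' k)) ∈ D} with hS₂
    have hS₁m : MeasurableSet S₁ := by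
      have : Measurable (fun u : (∀ _ : {k // p k}, E) =>
          (u ⟨a 0, Or.inl rfl⟩, u ⟨b 0, Or.inr rfl⟩)) :=
        (measurable_pi_apply _).prodMk (measurable_pi_apply _)
      exact this hD
    have hS₂m : MeasurableSet S₂ := by
      have : S₂ = ⋂ k : Fin m, {v : (∀ _ : {k // ¬ p k}, E) | (v (a' k), v (b' k)) ∈ D} := by
        ext v; simp [hS₂]
      rw [this]
      exact MeasurableSet.iInter fun k =>
        (((measurable_pi_apply _).prodMk (measurable_pi_apply _))) hD
    have hpre : {x : ι → E | ∀ k, (x (a k), x (b k)) ∈ D} =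
        (MeasurableEquiv.piEquivPiSubtypeProd (fun _ : ι => E) p) ⁻¹' (S₁ ×ˢ S₂) := by
      ext x
      simp only [mem_preimage, mem_prod, hS₁, hS₂, mem_setOf_eq]
      constructor
      · intro h
        exact ⟨h 0, fun k => h k.succ⟩
      · rintro ⟨h0, hs⟩ k
        rcases Fin.eq_zero_or_eq_succ k with rfl | ⟨k', rfl⟩
        · exact h0
        · exact hs k'
    rw [hpre, hmp.measure_preimage (hS₁m.prod hS₂m).nullMeasurableSet, Measure.prod_prod]
    have h1 : (Measure.pi fun _ : {k // p k} => μ) S₁ ≤ q := by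
      have : S₁ = {u : (∀ _ : {k // p k}, E) |
          (u ⟨a 0, Or.inl rfl⟩, u ⟨b 0, Or.inr rfl⟩) ∈ D} := rfl
      rw [this]
      exact pair_coord_bound μ hD hq (by simp [Subtype.ext_iff, hab])
    have h2 : (Measure.pi fun _ : {k // ¬ p k} => μ) S₂ ≤ q ^ m :=
      IH {k // ¬ p k} a' b' hinj'
    calc (Measure.pi fun _ : {k // p k} => μ) S₁ * (Measure.pi fun _ : {k // ¬ p k} => μ) S₂
        ≤ q * q ^ m := mul_le_mul' h1 h2
      _ = q ^ (m + 1) := (pow_succ' q m).symm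

end KeyLemma
section Cube

open MeasureTheory Set
open scoped ENNReal

lemma restrict_pi_pi' {ι : Type*} [Fintype ι] {α : ι → Type*} [∀ i, MeasurableSpace (α i)]
    (μ : ∀ i, Measure (α i)) [∀ i, SigmaFinite (μ i)] (s : ∀ i, Set (α i))
    [∀ i, SigmaFinite ((μ i).restrict (s i))] :
    (Measure.pi μ).restrict (univ.pi s) = Measure.pi (fun i => (μ i).restrict (s i)) := by
  refine (Measure.pi_eq fun t ht => ?_).symm
  rw [Measure.restrict_apply (MeasurableSet.univ_pi ht), ← Set.pi_inter_distrib,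
    Measure.pi_pi]
  exact Finset.prod_congr rfl fun i _ => (Measure.restrict_apply (ht i)).symm

variable (d : ℕ)

noncomputable abbrev cubeSet : Set (EuclideanSpace ℝ (Fin d)) :=
  {y | ∀ k, y k ∈ Set.Icc (0 : ℝ) 1}

noncomputable def cubeMeasure : Measure (EuclideanSpace ℝ (Fin d)) :=
  (volume : Measure (EuclideanSpace ℝ (Fin d))).restrict (cubeSet d)

lemma cubeSet_eq_preimage :
    cubeSet d = (MeasurableEquiv.toLp 2 (Fin d → ℝ)).symm ⁻¹'
      (univ.pi fun _ : Fin d => Set.Icc (0 : ℝ) 1) := by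
  ext y
  simp only [cubeSet, mem_setOf_eq, mem_preimage, Set.mem_pi, mem_univ, forall_true_left,
    Set.mem_Icc]
  exact Iff.rfl

lemma cubeSet_measurable : MeasurableSet (cubeSet d) := by
  rw [cubeSet_eq_preimage]
  exact (MeasurableEquiv.toLp 2 (Fin d → ℝ)).symm.measurable
    (MeasurableSet.univ_pi fun _ => measurableSet_Icc)

lemma cubeSet_volume : (volume : Measure (EuclideanSpace ℝ (Fin d))) (cubeSet d) = 1 := by
  rw [cubeSet_eq_preimage,
    (EuclideanSpace.volume_preserving_symm_measurableEquiv_toLp (Fin d)).measure_preimage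
      (MeasurableSet.univ_pi fun _ => measurableSet_Icc).nullMeasurableSet]
  rw [volume_pi, Measure.pi_pi]
  simp

instance cubeMeasure_prob : IsProbabilityMeasure (cubeMeasure d) :=
  ⟨by rw [cubeMeasure, Measure.restrict_apply_univ, cubeSet_volume]⟩

lemma unifCube_eq_pi (n : ℕ) :
    unifCube d n = Measure.pi (fun _ : Fin n => cubeMeasure d) := by
  unfold unifCube
  have hset : {x : Fin n → EuclideanSpace ℝ (Fin d) | ∀ i, ∀ k, x i k ∈ Set.Icc (0 : ℝ) 1} =
      univ.pi (fun _ : Fin n => cubeSet d) := by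
    ext x; simp [cubeSet]
  haveI : ∀ i : Fin n, SigmaFinite
      ((volume : Measure (EuclideanSpace ℝ (Fin d))).restrict (cubeSet d)) := by
    intro i
    have : IsFiniteMeasure ((volume : Measure (EuclideanSpace ℝ (Fin d))).restrict (cubeSet d)) :=
      ⟨by rw [Measure.restrict_apply_univ, cubeSet_volume]; exact ENNReal.one_lt_top⟩
    infer_instance
  rw [hset, volume_pi, restrict_pi_pi']
  rfl

end Cube
section ListLemmas

def disjPair {γ : Type*} (p q : γ × γ) : Prop :=
  p.1 ≠ q.1 ∧ p.1 ≠ q.2 ∧ p.2 ≠ q.1 ∧ p.2 ≠ q.2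

instance {γ : Type*} [DecidableEq γ] : DecidableRel (disjPair (γ := γ)) :=
  fun _ _ => by unfold disjPair; infer_instance

lemma countP_notdisj_le {γ : Type*} [DecidableEq γ] (p : γ × γ) (l : List (γ × γ)) :
    l.countP (fun q => !decide (disjPair p q)) ≤
      l.countP (fun q => decide (q.1 = p.1)) + l.countP (fun q => decide (q.1 = p.2)) +
      l.countP (fun q => decide (q.2 = p.1)) + l.countP (fun q => decide (q.2 = p.2)) := by
  induction l with
  | nil => simp
  | cons q l IH =>
    simp only [List.countP_cons]
    have key : (if (!decide (disjPair p q)) = true then 1 else 0) ≤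
        (if decide (q.1 = p.1) = true then 1 else 0) +
        (if decide (q.1 = p.2) = true then 1 else 0) +
        (if decide (q.2 = p.1) = true then 1 else 0) +
        (if decide (q.2 = p.2) = true then 1 else 0) := by
      by_cases h : disjPair p q
      · simp [h]
      · have h4 : q.1 = p.1 ∨ q.1 = p.2 ∨ q.2 = p.1 ∨ q.2 = p.2 := by
          by_contra hc
          push_neg at hc
          exact h ⟨fun e => hc.1 e.symm, fun e => hc.2.2.1 e.symm,
            fun e => hc.2.1 e.symm, fun e => hc.2.2.2 e.symm⟩
        rcases h4 with h4 | h4 | h4 | h4 <;> simp [h4] <;> split_ifs <;> omega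
    omega

lemma countP_mem_eq_card {γ : Type*} [DecidableEq γ] (L : List γ) (h : ∀ v, L.count v = 1)
    (A : Finset γ) : L.countP (fun v => decide (v ∈ A)) = A.card := by
  have hnd : L.Nodup := List.nodup_iff_count_le_one.mpr (fun v => (h v).le)
  rw [List.countP_eq_length_filter]
  have hnd' : (L.filter (fun v => decide (v ∈ A))).Nodup := hnd.filter _
  rw [← List.toFinset_card_of_nodup hnd']
  congr 1
  ext v
  simp only [List.mem_toFinset, List.mem_filter, decide_eq_true_eq]
  have hv : v ∈ L := by rw [← List.count_pos_iff, h v]; norm_num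
  tauto

lemma extract_disjoint {γ : Type*} [DecidableEq γ] :
    ∀ (N : ℕ) (l : List (γ × γ)), l.length ≤ N →
      (l.map Prod.fst).Nodup → (l.map Prod.snd).Nodup →
      ∃ t : List (γ × γ), (∀ p ∈ t, p ∈ l) ∧ List.Pairwise disjPair t ∧
        l.length ≤ 3 * t.length := by
  intro N
  induction N with
  | zero =>
    intro l hl _ _
    have hnil : l = [] := List.length_eq_zero_iff.mp (Nat.le_zero.mp hl)
    subst hnil
    exact ⟨[], by simp, by simp, by simp⟩
  | succ N IH =>
    intro l hl h1 h2
    match l, h1, h2, hl with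
    | [], _, _, _ => exact ⟨[], by simp, by simp, by simp⟩
    | p :: l', h1, h2, hl =>
      set l'' := l'.filter (fun q => decide (disjPair p q)) with hl''def
      simp only [List.map_cons, List.nodup_cons] at h1 h2
      have hc1 : l'.countP (fun q => decide (q.1 = p.1)) = 0 := by
        rw [List.countP_eq_length_filter, List.length_eq_zero_iff]
        rw [List.filter_eq_nil_iff]
        intro q hq
        simp only [decide_eq_true_eq]
        intro hqe
        exact h1.1 (hqe ▸ List.mem_map_of_mem (f := Prod.fst) hq)
      have hc4 : l'.countP (fun q => decide (q.2 = p.2)) = 0 := by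
        rw [List.countP_eq_length_filter, List.length_eq_zero_iff, List.filter_eq_nil_iff]
        intro q hq
        simp only [decide_eq_true_eq]
        intro hqe
        exact h2.1 (hqe ▸ List.mem_map_of_mem (f := Prod.snd) hq)
      have hc2 : l'.countP (fun q => decide (q.1 = p.2)) ≤ 1 := by
        have := List.nodup_iff_count_le_one.mp h1.2 p.2
        rw [List.count, List.countP_map] at this
        exact le_trans (le_of_eq (List.countP_congr (fun q _ => by
          simp [Function.comp]))) this
      have hc3 : l'.countP (fun q => decide (q.2 = p.1)) ≤ 1 := by
        have := List.nodup_iff_count_le_one.mp h2.2 p.1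
        rw [List.count, List.countP_map] at this
        exact le_trans (le_of_eq (List.countP_congr (fun q _ => by
          simp [Function.comp]))) this
      have hlen'' : l'.length ≤ l''.length + 2 := by
        have hsplit := List.length_eq_countP_add_countP (fun q => decide (disjPair p q)) (l := l')
        have : l'.countP (fun q => !decide (disjPair p q)) ≤ 2 := by
          have := countP_notdisj_le p l'
          omega
        have hcc : l''.length = l'.countP (fun q => decide (disjPair p q)) := by
          rw [hl''def, List.countP_eq_length_filter]
        have : l'.countP (fun q => ¬ decide (disjPair p q) = true) =
            l'.countP (fun q => !decide (disjPair p q)) :=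
          List.countP_congr (fun q _ => by simp)
        omega
      obtain ⟨t', ht'mem, ht'pw, ht'len⟩ := IH l''
        (by
          have : l''.length ≤ l'.length := by
            rw [hl''def]; exact List.length_filter_le _ _
          simp only [List.length_cons] at hl
          omega)
        (List.Nodup.sublist (List.Sublist.map Prod.fst (List.filter_sublist (l := l'))) h1.2)
        (List.Nodup.sublist (List.Sublist.map Prod.snd (List.filter_sublist (l := l'))) h2.2)
      have hmem'' : ∀ q ∈ l'', q ∈ l' := fun q hq => List.mem_of_mem_filter hq
      have hdisj'' : ∀ q ∈ l'', disjPair p q := fun q hq => by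
        have := List.of_mem_filter hq
        simpa using this
      refine ⟨p :: t', ?_, ?_, ?_⟩
      · intro q hq
        rcases List.mem_cons.mp hq with rfl | hq
        · exact List.mem_cons_self
        · exact List.mem_cons_of_mem _ (hmem'' _ (ht'mem _ hq))
      · exact List.Pairwise.cons (fun q hq => hdisj'' _ (ht'mem _ hq)) ht'pw
      · simp only [List.length_cons]
        omega

end ListLemmas
section GraphLemma

open SimpleGraph

lemma countP_not_and_le {γ : Type*} (P Q : γ → Prop) [DecidablePred P] [DecidablePred Q]
    (l : List γ) :
    l.countP (fun x => !decide (¬ P x ∧ ¬ Q x)) ≤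
      l.countP (fun x => decide (P x)) + l.countP (fun x => decide (Q x)) := by
  induction l with
  | nil => simp
  | cons x l IH =>
    simp only [List.countP_cons]
    have key : (if (!decide (¬ P x ∧ ¬ Q x)) = true then 1 else 0) ≤
        (if decide (P x) = true then 1 else 0) + (if decide (Q x) = true then 1 else 0) := by
      by_cases hP : P x
      · simp [hP]
      · by_cases hQ : Q x <;> simp [hP, hQ]
    omega

lemma ham_gives_list {n : ℕ} (hn : 2 ≤ n) (G : SimpleGraph (Fin n)) (A : Finset (Fin n))
    (R : Fin n → Fin n → Prop)
    (hyp : ∀ i j : Fin n, G.Adj i j → i ∉ A → j ∉ A → R i j)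
    (hham : G.IsHamiltonian) :
    ∃ l : List (Fin n × Fin n),
      (l.map Prod.fst).Nodup ∧ (l.map Prod.snd).Nodup ∧
      (∀ p ∈ l, p.1 ≠ p.2 ∧ R p.1 p.2) ∧ n ≤ l.length + 2 * A.card := by
  classical
  obtain ⟨v, p, hp⟩ := hham (by simp only [Fintype.card_fin]; omega)
  set l₀ : List (Fin n × Fin n) := p.darts.map (fun dd => (dd.fst, dd.snd)) with hl₀
  have hfst : l₀.map Prod.fst = p.support.dropLast := by
    rw [hl₀, List.map_map]
    exact p.map_fst_darts
  have hsnd : l₀.map Prod.snd = p.support.tail := by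
    rw [hl₀, List.map_map]
    exact p.map_snd_darts
  have hnotnil : ¬ p.Nil := hp.1.not_nil
  have hsndcount : ∀ w, (l₀.map Prod.snd).count w = 1 := by
    intro w
    rw [hsnd, ← SimpleGraph.Walk.support_tail_of_not_nil p hnotnil]
    exact hp.isHamiltonian_tail w
  have hsupp : p.support = p.support.dropLast ++ [v] := by
    conv_lhs => rw [← List.dropLast_append_getLast p.support_ne_nil]
    rw [p.getLast_support]
  have hfstcount : ∀ w, (l₀.map Prod.fst).count w = 1 := by
    intro w
    rw [hfst]
    by_cases hw : w = v
    · subst hw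
      have h2 : p.support.count w = 2 := hp.count_support_self
      rw [hsupp, List.count_append] at h2
      simpa using h2
    · have h1 : p.support.count w = 1 := hp.support_count_of_ne (Ne.symm hw)
      rw [hsupp, List.count_append] at h1
      have hv : List.count w [v] = 0 := List.count_eq_zero.mpr (by simp [hw])
      omega
  have hlen₀ : l₀.length = n := by
    rw [hl₀, List.length_map, p.length_darts, hp.length_eq, Fintype.card_fin]
  set l : List (Fin n × Fin n) := l₀.filter (fun q => decide (q.1 ∉ A ∧ q.2 ∉ A)) with hldef
  have hsub : l.Sublist l₀ := List.filter_sublist (l := l₀)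
  refine ⟨l, ?_, ?_, ?_, ?_⟩
  · exact List.Nodup.sublist (List.Sublist.map Prod.fst hsub)
      (List.nodup_iff_count_le_one.mpr fun w => (hfstcount w).le)
  · exact List.Nodup.sublist (List.Sublist.map Prod.snd hsub)
      (List.nodup_iff_count_le_one.mpr fun w => (hsndcount w).le)
  · intro q hq
    have hmem : q ∈ l₀ := hsub.subset hq
    have hcond := List.of_mem_filter hq
    simp only [decide_eq_true_eq] at hcond
    obtain ⟨dd, hdd, rfl⟩ := List.mem_map.mp hmem
    exact ⟨dd.adj.ne, hyp _ _ dd.adj hcond.1 hcond.2⟩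
  · have hsplit := List.length_eq_countP_add_countP (fun q : Fin n × Fin n =>
      decide (q.1 ∉ A ∧ q.2 ∉ A)) (l := l₀)
    have hll : l.length = l₀.countP (fun q => decide (q.1 ∉ A ∧ q.2 ∉ A)) := by
      rw [hldef, List.countP_eq_length_filter]
    have hnot : l₀.countP (fun q => ¬ decide (q.1 ∉ A ∧ q.2 ∉ A) = true) =
        l₀.countP (fun q => !decide (q.1 ∉ A ∧ q.2 ∉ A)) :=
      List.countP_congr (fun q _ => by simp)
    have hbound := countP_not_and_le (fun q : Fin n × Fin n => q.1 ∈ A)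
      (fun q : Fin n × Fin n => q.2 ∈ A) l₀
    have hP : l₀.countP (fun q => decide (q.1 ∈ A)) = A.card := by
      have := List.countP_map (p := fun v : Fin n => decide (v ∈ A)) (f := Prod.fst) (l := l₀)
      rw [← countP_mem_eq_card (l₀.map Prod.fst) hfstcount A, this]
      rfl
    have hQ : l₀.countP (fun q => decide (q.2 ∈ A)) = A.card := by
      have := List.countP_map (p := fun v : Fin n => decide (v ∈ A)) (f := Prod.snd) (l := l₀)
      rw [← countP_mem_eq_card (l₀.map Prod.snd) hsndcount A, this]
      rfl
    omega

end GraphLemma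
section Assembly

open MeasureTheory Set
open scoped ENNReal

noncomputable def enumOf {n m : ℕ} (hn : 0 < n) (S : Finset (Fin n)) : Fin m → Fin n :=
  fun k => if h : S.card = m then ((S.orderIsoOfFin h) k : Fin n) else ⟨0, hn⟩

lemma enumOf_mem {n m : ℕ} (hn : 0 < n) (S : Finset (Fin n)) (h : S.card = m) (k : Fin m) :
    enumOf hn S k ∈ S := by
  rw [enumOf, dif_pos h]
  exact ((S.orderIsoOfFin h) k).2

lemma enumOf_injective {n m : ℕ} (hn : 0 < n) (S : Finset (Fin n)) (h : S.card = m) :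
    Function.Injective (enumOf (m := m) hn S) := by
  intro k l hkl
  simp only [enumOf, dif_pos h] at hkl
  exact (S.orderIsoOfFin h).injective (Subtype.ext hkl)

lemma measure_ham_le {d n : ℕ} (hn : 2 ≤ n) (r : ℝ) (hr : 0 ≤ r)
    (A : Finset (Fin n)) (H : SimpleGraph (Fin n))
    (hH : ∀ i j : Fin n, H.Adj i j ↔ ((i ∈ A ∧ j ∉ A) ∨ (i ∉ A ∧ j ∈ A)))
    (m : ℕ) (hm : 3 * m + 2 * A.card ≤ n) :
    Measure.pi (fun _ : Fin n => cubeMeasure d)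
        {x | (H ⊔ geoGraph d n r x).IsHamiltonian} ≤
      ((2 ^ n * n ^ m : ℕ) : ℝ≥0∞) *
        (ENNReal.ofReal (r ^ d) *
          volume (Metric.ball (0 : EuclideanSpace ℝ (Fin d)) 1)) ^ m := by
  classical
  have hn' : 0 < n := by omega
  set E' := EuclideanSpace ℝ (Fin d)
  set D : Set (E' × E') := {pp | dist pp.1 pp.2 ≤ r} with hDdef
  have hD : MeasurableSet D :=
    (isClosed_le (continuous_fst.dist continuous_snd) continuous_const).measurableSet
  set q : ℝ≥0∞ := ENNReal.ofReal (r ^ d) * volume (Metric.ball (0 : E') 1) with hqdef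
  have hq : ∀ z : E', cubeMeasure d {y | (z, y) ∈ D} ≤ q := by
    intro z
    have hset : {y : E' | (z, y) ∈ D} = Metric.closedBall z r := by
      ext y
      simp [hDdef, Metric.mem_closedBall, dist_comm]
    rw [hset]
    refine le_trans (Measure.restrict_le_self _) ?_
    rw [MeasureTheory.Measure.addHaar_closedBall _ z hr, finrank_euclideanSpace_fin]
  -- the union bound events
  set Valid : Finset (Fin n) × (Fin m → Fin n) → Prop :=
    fun Sb => Function.Injective (Sum.elim (enumOf (m := m) hn' Sb.1) Sb.2) with hValid
  set Ev : Finset (Fin n) × (Fin m → Fin n) → Set (Fin n → E') :=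
    fun Sb => if Valid Sb then
      {x | ∀ k : Fin m, (x (enumOf hn' Sb.1 k), x (Sb.2 k)) ∈ D} else ∅ with hEv
  have hcover : {x : Fin n → E' | (H ⊔ geoGraph d n r x).IsHamiltonian} ⊆ ⋃ Sb, Ev Sb := by
    intro x hx
    simp only [mem_setOf_eq] at hx
    -- get the list of disjoint pairs
    obtain ⟨l, hl1, hl2, hl3, hl4⟩ := ham_gives_list hn (H ⊔ geoGraph d n r x) A
      (fun i j => dist (x i) (x j) ≤ r)
      (by
        intro i j hadj hiA hjA
        rcases hadj with hadj | hadj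
        · rw [hH i j] at hadj; tauto
        · rw [geoGraph, SimpleGraph.fromRel_adj] at hadj
          rcases hadj.2 with h | h
          · exact h
          · rw [dist_comm]; exact h) hx
    obtain ⟨t, htmem, htpw, htlen⟩ := extract_disjoint l.length l le_rfl hl1 hl2
    have htm : m ≤ t.length := by omega
    set t' := t.take m with ht'def
    have ht'len : t'.length = m := by
      rw [ht'def, List.length_take]; omega
    have ht'sub : t'.Sublist t := List.take_sublist m t
    have ht'mem : ∀ p ∈ t', p ∈ l := fun p hp => htmem p (ht'sub.subset hp)
    have ht'pw : t'.Pairwise disjPair := htpw.sublist ht'sub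
    have ht'disj : ∀ p ∈ t', ∀ q ∈ t', p ≠ q → disjPair p q := by
      intro p hp q hq hpq
      exact (ht'pw.imp (fun {a b} h (_ : a ≠ b) => h) : t'.Pairwise (fun a b => a ≠ b → disjPair a b)).forall_of_forall_of_flip
        (fun _ _ h => absurd rfl h) (ht'pw.imp (fun hab _ => ⟨hab.1.symm, hab.2.2.1.symm,
        hab.2.1.symm, hab.2.2.2.symm⟩)) hp hq hpq
    have hfstnd : (t'.map Prod.fst).Nodup := by
      have hpw : t'.Pairwise (fun p q : Fin n × Fin n => p.1 ≠ q.1) :=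
        ht'pw.imp (fun h => h.1)
      exact List.pairwise_map.mpr hpw
    set S : Finset (Fin n) := (t'.map Prod.fst).toFinset with hSdef
    have hScard : S.card = m := by
      rw [hSdef, List.toFinset_card_of_nodup hfstnd, List.length_map, ht'len]
    set pr : Fin n → Fin n × Fin n :=
      fun w => ((t'.find? (fun q => q.1 == w)).getD (w, w)) with hprdef
    have hpr : ∀ w ∈ S, pr w ∈ t' ∧ (pr w).1 = w := by
      intro w hw
      rw [hSdef, List.mem_toFinset] at hw
      obtain ⟨qq, hqq, hqq1⟩ := List.mem_map.mp hw
      have hsome : (t'.find? (fun q => q.1 == w)).isSome :=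
        List.find?_isSome.mpr ⟨qq, hqq, by simp [hqq1]⟩
      obtain ⟨q₀, hq₀⟩ := Option.isSome_iff_exists.mp hsome
      have h1 : q₀ ∈ t' := List.mem_of_find?_eq_some hq₀
      have h2 : q₀.1 = w := by
        have := List.find?_some hq₀
        simpa using this
      rw [hprdef]
      simp only [hq₀, Option.getD_some]
      exact ⟨h1, h2⟩
    set b : Fin m → Fin n := fun k => (pr (enumOf hn' S k)).2 with hbdef
    have hen : ∀ k : Fin m, enumOf hn' S k ∈ S := fun k => enumOf_mem hn' S hScard k
    have hpk : ∀ k : Fin m, pr (enumOf hn' S k) ∈ t' ∧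
        (pr (enumOf hn' S k)).1 = enumOf hn' S k := fun k => hpr _ (hen k)
    have hne : ∀ p ∈ t', p.1 ≠ p.2 := fun p hp => (hl3 p (ht'mem p hp)).1
    have hdist : ∀ p ∈ t', dist (x p.1) (x p.2) ≤ r := fun p hp => (hl3 p (ht'mem p hp)).2
    have hpkne : ∀ k k' : Fin m, k ≠ k' →
        pr (enumOf hn' S k) ≠ pr (enumOf hn' S k') := by
      intro k k' hkk' heq
      apply hkk'
      apply enumOf_injective hn' S hScard
      rw [← (hpk k).2, ← (hpk k').2, heq]
    have hvalid : Valid (S, b) := by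
      rw [hValid]
      intro s t hst
      cases s with
      | inl k => cases t with
        | inl k' =>
          exact congrArg Sum.inl (enumOf_injective hn' S hScard hst)
        | inr k' =>
          exfalso
          simp only [Sum.elim_inl, Sum.elim_inr] at hst
          by_cases hkk' : k = k'
          · subst hkk'
            exact hne _ (hpk k).1 ((hpk k).2.trans hst)
          · have hdisj := ht'disj _ (hpk k).1 _ (hpk k').1 (hpkne k k' hkk')
            exact hdisj.2.1 ((hpk k).2.trans hst)
      | inr k => cases t with
        | inl k' =>
          exfalso
          simp only [Sum.elim_inl, Sum.elim_inr] at hst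
          by_cases hkk' : k = k'
          · subst hkk'
            exact hne _ (hpk k).1 ((hpk k).2.trans hst.symm)
          · have hdisj := ht'disj _ (hpk k').1 _ (hpk k).1 (hpkne k' k (Ne.symm hkk'))
            exact hdisj.2.1 ((hpk k').2.trans hst.symm)
        | inr k' =>
          simp only [Sum.elim_inr] at hst
          by_cases hkk' : k = k'
          · exact congrArg Sum.inr hkk'
          · exfalso
            have hdisj := ht'disj _ (hpk k).1 _ (hpk k').1 (hpkne k k' hkk')
            exact hdisj.2.2.2 hst
    refine mem_iUnion.mpr ⟨(S, b), ?_⟩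
    rw [hEv]
    simp only [if_pos hvalid]
    intro k
    have h1 := (hpk k).1
    have h2 := (hpk k).2
    show (x (enumOf hn' S k), x (b k)) ∈ D
    have := hdist _ h1
    rw [h2] at this
    exact this
  -- union bound
  have hterm : ∀ Sb : Finset (Fin n) × (Fin m → Fin n),
      Measure.pi (fun _ : Fin n => cubeMeasure d) (Ev Sb) ≤ q ^ m := by
    intro Sb
    rw [hEv]
    dsimp only
    split_ifs with hv
    · exact key_pi_bound (cubeMeasure d) hD hq m (Fin n) (enumOf hn' Sb.1) Sb.2 hv
    · simp
  calc Measure.pi (fun _ : Fin n => cubeMeasure d)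
        {x | (H ⊔ geoGraph d n r x).IsHamiltonian}
      ≤ Measure.pi (fun _ : Fin n => cubeMeasure d) (⋃ Sb, Ev Sb) :=
        measure_mono hcover
    _ ≤ ∑' Sb : Finset (Fin n) × (Fin m → Fin n),
        Measure.pi (fun _ : Fin n => cubeMeasure d) (Ev Sb) := measure_iUnion_le _
    _ ≤ ∑' _Sb : Finset (Fin n) × (Fin m → Fin n), q ^ m := ENNReal.tsum_le_tsum hterm
    _ = ((2 ^ n * n ^ m : ℕ) : ℝ≥0∞) * q ^ m := by
        rw [tsum_fintype, Finset.sum_const, nsmul_eq_mul]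
        congr 1
        rw [Finset.card_univ, Fintype.card_prod, Fintype.card_finset, Fintype.card_fun]
        simp

end Assembly

/-- For every `d ≥ 1` and constant `α ∈ (0,1/2)` there exists `c > 0` such that if `H` is
the complete bipartite `n`-vertex graph with parts of sizes `⌊αn⌋` and `n - ⌊αn⌋`, then
a.a.s. `H ∪ G^d(n, (c/n)^{1/d})` is not Hamiltonian. -/
theorem not_hamiltonian_complete_bipartite_perturbed :
    ∀ d : ℕ, 1 ≤ d → ∀ α : ℝ, 0 < α → α < 1 / 2 →
    ∃ c : ℝ, 0 < c ∧
      ∀ A : (n : ℕ) → Finset (Fin n), (∀ n : ℕ, (A n).card = ⌊α * n⌋₊) →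
      ∀ H : (n : ℕ) → SimpleGraph (Fin n),
      (∀ n : ℕ, ∀ i j : Fin n,
        (H n).Adj i j ↔ ((i ∈ A n ∧ j ∉ A n) ∨ (i ∉ A n ∧ j ∈ A n))) →
      Tendsto
        (fun n : ℕ =>
          unifCube d n
            {x | ¬ ((H n) ⊔ geoGraph d n ((c / n) ^ ((1 : ℝ) / d)) x).IsHamiltonian})
        atTop (nhds (1 : ENNReal)) := by
  intro d hd α hα hα2
  set β : ℝ := 1 - 2 * α with hβdef
  have hβ : 0 < β := by simp only [hβdef]; linarith
  set V : ℝ≥0∞ := volume (Metric.ball (0 : EuclideanSpace ℝ (Fin d)) 1) with hVdef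
  have hVtop : V ≠ ∞ := by
    rw [hVdef]
    exact (Metric.isBounded_ball.measure_lt_top).ne
  set Vr : ℝ := V.toReal with hVrdef
  have hVr0 : 0 ≤ Vr := ENNReal.toReal_nonneg
  set K : ℕ := ⌈(9 : ℝ) / β⌉₊ + 1 with hKdef
  have hK9 : (9 : ℝ) / β ≤ K := by
    rw [hKdef]
    push_cast
    exact (Nat.le_ceil _).trans (by linarith)
  have hKβ : 9 ≤ (K : ℝ) * β := by
    rw [div_le_iff₀ hβ] at hK9
    linarith
  set c : ℝ := min 1 ((1 / 2 : ℝ) ^ K / (Vr + 1)) with hcdef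
  have hc : 0 < c := by
    rw [hcdef]
    apply lt_min one_pos
    positivity
  have hcV : c * Vr ≤ (1 / 2 : ℝ) ^ K := by
    have h1 : c ≤ (1 / 2 : ℝ) ^ K / (Vr + 1) := min_le_right _ _
    have h2 : (0 : ℝ) < (1 / 2 : ℝ) ^ K := by positivity
    have h3 : c * Vr ≤ ((1 / 2 : ℝ) ^ K / (Vr + 1)) * Vr :=
      mul_le_mul_of_nonneg_right h1 hVr0
    have h4 : ((1 / 2 : ℝ) ^ K / (Vr + 1)) * Vr ≤ (1 / 2 : ℝ) ^ K := by
      rw [div_mul_eq_mul_div, div_le_iff₀ (by linarith)]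
      nlinarith
    linarith
  refine ⟨c, hc, ?_⟩
  intro A hA H hH
  -- the sequence of radii
  set r : ℕ → ℝ := fun n => (c / n) ^ ((1 : ℝ) / d) with hrdef
  -- lower bound sequence
  have h2inv : (2⁻¹ : ℝ≥0∞) < 1 := by
    rw [ENNReal.inv_lt_one]
    norm_num
  have hpow0 : Tendsto (fun n : ℕ => (2⁻¹ : ℝ≥0∞) ^ n) atTop (nhds 0) :=
    ENNReal.tendsto_pow_atTop_nhds_zero_of_lt_one h2inv
  have hlow : Tendsto (fun n : ℕ => 1 - (2⁻¹ : ℝ≥0∞) ^ n) atTop (nhds 1) := by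
    have hcont := (ENNReal.continuous_sub_left ENNReal.one_ne_top).tendsto (0 : ℝ≥0∞)
    have := hcont.comp hpow0
    rw [tsub_zero] at this
    exact this
  -- upper bound: measures are ≤ 1
  have hup : ∀ n : ℕ, unifCube d n
      {x | ¬ ((H n) ⊔ geoGraph d n (r n) x).IsHamiltonian} ≤ 1 := by
    intro n
    rw [unifCube_eq_pi]
    exact prob_le_one
  -- the main eventual bound
  have hmain : ∀ᶠ n : ℕ in atTop, 1 - (2⁻¹ : ℝ≥0∞) ^ n ≤ unifCube d n
      {x | ¬ ((H n) ⊔ geoGraph d n (r n) x).IsHamiltonian} := by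
    rw [eventually_atTop]
    refine ⟨max 2 K, fun n hn => ?_⟩
    have hn2 : 2 ≤ n := le_trans (le_max_left _ _) hn
    have hnK : K ≤ n := le_trans (le_max_right _ _) hn
    have hn0 : 0 < n := by omega
    have hn0' : (0 : ℝ) < n := by positivity
    set a : ℕ := (A n).card with hadef
    have haval : a = ⌊α * n⌋₊ := hA n
    have haR : (a : ℝ) ≤ α * n := by
      rw [haval]
      exact Nat.floor_le (by positivity)
    have h2a : 2 * a < n := by
      have : (2 * a : ℝ) < n := by
        calc (2 * a : ℝ) ≤ 2 * (α * n) := by linarith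
          _ < n := by nlinarith
      exact_mod_cast this
    set m : ℕ := (n - 2 * a) / 3 with hmdef
    have hm3 : 3 * m + 2 * a ≤ n := by
      have := Nat.div_mul_le_self (n - 2 * a) 3
      have h3 : 3 * m ≤ n - 2 * a := by
        rw [hmdef]; omega
      omega
    have hm2 : n - 2 * a ≤ 3 * m + 2 := by
      rw [hmdef]
      omega
    -- K * m ≥ 2 * n
    have hKm : 2 * n ≤ K * m := by
      have hc1 : (n : ℝ) - 2 * a ≤ 3 * m + 2 := by
        have : ((n - 2 * a : ℕ) : ℝ) = (n : ℝ) - 2 * a := by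
          push_cast [Nat.cast_sub (by omega : 2 * a ≤ n)]
          ring
        rw [← this]
        exact_mod_cast hm2
      have hc2 : β * n ≤ (n : ℝ) - 2 * a := by
        rw [hβdef]
        nlinarith
      have hc3 : (2 * K : ℝ) ≤ 3 * n := by
        have : (K : ℝ) ≤ n := by exact_mod_cast hnK
        linarith
      have hc4 : (6 * n : ℝ) ≤ 3 * (K * m) := by
        have hK0 : (0 : ℝ) ≤ K := by positivity
        nlinarith
      have : (2 * n : ℝ) ≤ (K : ℝ) * m := by linarith
      exact_mod_cast this
    -- properties of the radius
    have hcn : 0 ≤ c / n := by positivity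
    have hr0 : 0 ≤ r n := Real.rpow_nonneg hcn _
    have hrd : r n ^ d = c / n := by
      rw [hrdef]
      rw [← Real.rpow_natCast ((c / n) ^ ((1 : ℝ) / d)) d, ← Real.rpow_mul hcn]
      rw [one_div, inv_mul_cancel₀ (by exact_mod_cast (by omega : d ≠ 0) : (d : ℝ) ≠ 0)]
      exact Real.rpow_one _
    -- the measure bound
    have hbound := measure_ham_le (d := d) hn2 (r n) hr0 (A n) (H n) (hH n) m hm3
    rw [hrd] at hbound
    -- numeric estimate
    have hnum : ((2 ^ n * n ^ m : ℕ) : ℝ≥0∞) *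
        (ENNReal.ofReal (c / n) * V) ^ m ≤ (2⁻¹ : ℝ≥0∞) ^ n := by
      have hcast : ((2 ^ n * n ^ m : ℕ) : ℝ≥0∞) = 2 ^ n * ((n : ℝ≥0∞)) ^ m := by
        push_cast
        ring
      rw [hcast, mul_assoc, ← mul_pow]
      have hnq : (n : ℝ≥0∞) * (ENNReal.ofReal (c / n) * V) ≤
          (2⁻¹ : ℝ≥0∞) ^ K := by
        have e1 : (n : ℝ≥0∞) * (ENNReal.ofReal (c / n) * V) =
            (ENNReal.ofReal (n : ℝ) * ENNReal.ofReal (c / n)) * V := by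
          rw [ENNReal.ofReal_natCast]
          ring
        rw [e1, ← ENNReal.ofReal_mul (by positivity)]
        have e2 : (n : ℝ) * (c / n) = c := by
          field_simp
        rw [e2]
        have e3 : V = ENNReal.ofReal Vr := by
          rw [hVrdef, ENNReal.ofReal_toReal hVtop]
        rw [e3, ← ENNReal.ofReal_mul hc.le]
        calc ENNReal.ofReal (c * Vr) ≤ ENNReal.ofReal ((1 / 2 : ℝ) ^ K) :=
              ENNReal.ofReal_le_ofReal hcV
          _ = (2⁻¹ : ℝ≥0∞) ^ K := by
              rw [ENNReal.ofReal_pow (by norm_num)]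
              congr 1
              rw [one_div, ENNReal.ofReal_inv_of_pos (by norm_num)]
              norm_num
      calc (2 : ℝ≥0∞) ^ n * ((n : ℝ≥0∞) * (ENNReal.ofReal (c / n) * V)) ^ m
          ≤ 2 ^ n * ((2⁻¹ : ℝ≥0∞) ^ K) ^ m := by
            exact mul_le_mul_right (pow_le_pow_left' hnq m) _
        _ = 2 ^ n * (2⁻¹ : ℝ≥0∞) ^ (K * m) := by rw [← pow_mul]
        _ ≤ 2 ^ n * (2⁻¹ : ℝ≥0∞) ^ (2 * n) := by
            exact mul_le_mul_right (pow_le_pow_of_le_one (by simp) h2inv.le hKm) _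
        _ = (2⁻¹ : ℝ≥0∞) ^ n := by
            rw [two_mul, pow_add, ← mul_assoc, ← mul_pow]
            rw [ENNReal.mul_inv_cancel (by norm_num) (by norm_num)]
            rw [one_pow, one_mul]
    -- combine
    have hham : unifCube d n {x | ((H n) ⊔ geoGraph d n (r n) x).IsHamiltonian} ≤
        (2⁻¹ : ℝ≥0∞) ^ n := by
      rw [unifCube_eq_pi]
      exact hbound.trans hnum
    have htot : (1 : ℝ≥0∞) ≤ unifCube d n
        {x | ¬ ((H n) ⊔ geoGraph d n (r n) x).IsHamiltonian} +
        unifCube d n {x | ((H n) ⊔ geoGraph d n (r n) x).IsHamiltonian} := by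
      have hu : unifCube d n univ = 1 := by
        rw [unifCube_eq_pi]
        exact measure_univ
      calc (1 : ℝ≥0∞) = unifCube d n univ := hu.symm
        _ = unifCube d n ({x | ¬ ((H n) ⊔ geoGraph d n (r n) x).IsHamiltonian} ∪
            {x | ((H n) ⊔ geoGraph d n (r n) x).IsHamiltonian}) := by
            congr 1
            ext x
            simp [em']
        _ ≤ _ := measure_union_le _ _
    have := le_trans htot (add_le_add_right hham _)
    exact tsub_le_iff_right.mpr this
  refine tendsto_of_tendsto_of_tendsto_of_le_of_le' hlow tendsto_const_nhds hmain
    (Eventually.of_forall hup)
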